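/- Let (S,d) be a metric space, let (μ_n)_{n ≥ 1} be a sequence of finite positive Borel measures on S with sup_n μ_n(S) < ∞, and let (E_n)_{n ≥ 1} be a sequence of pairwise disjoint Borel subsets of S. Then for every ε > 0 there exists a strictly increasing sequence (n_i)_{i ≥ 1} of positive integers such that for every i ≥ 1, μ_{n_i}( ⋃_{j ≠ i} E_{n_j} ) < ε. -/

import Mathlib

open MeasureTheory Filter Topology ENNReal

/-- Iterate a choice function to build the chain of picked indices and surviving sets. -/
noncomputable def mychain (F : ℕ → Set ℕ → ℕ × Set ℕ) : ℕ → ℕ × Set ℕ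
  | 0 => F 0 Set.univ
  | k + 1 => F (k + 1) (mychain F k).2

/-- Key selection lemma: from any infinite set of indices we can pick an index `n` and an
infinite subset `A'` of later indices such that every measure indexed in `A'` gives mass `< δ`
to `E n`, and the measure `μ n` gives mass `< θ` to the union of the sets indexed by `A'`. -/
lemma key_selection {S : Type*} [MeasurableSpace S]
    (μ : ℕ → Measure S) (C : ℝ≥0∞) (hCtop : C ≠ ⊤) (hbd : ∀ n, μ n Set.univ ≤ C)
    (E : ℕ → Set S) (hE : ∀ n, MeasurableSet (E n))
    (hdisj : ∀ n m, n ≠ m → Disjoint (E n) (E m))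
    (δ θ : ℝ≥0∞) (hδ0 : δ ≠ 0) (hδt : δ ≠ ⊤) (hθ0 : θ ≠ 0)
    (A : Set ℕ) (hA : A.Infinite) :
    ∃ p : ℕ × Set ℕ, p.1 ∈ A ∧ p.2 ⊆ A ∧ p.2.Infinite ∧
      (∀ m ∈ p.2, p.1 < m ∧ μ m (E p.1) < δ) ∧
      μ p.1 (⋃ m ∈ p.2, E m) < θ := by
  -- Step 1: the set of "bad" indices n' (for which only finitely many m ∈ A have
  -- μ m (E n') < δ) is finite.
  have hBad : {n' : ℕ | Set.Finite {m | m ∈ A ∧ μ m (E n') < δ}}.Finite := by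
    by_contra hB
    have hBinf : {n' : ℕ | Set.Finite {m | m ∈ A ∧ μ m (E n') < δ}}.Infinite := hB
    obtain ⟨k0, hk0⟩ := ENNReal.exists_nat_gt (show C / δ ≠ ⊤ from
      (ENNReal.div_lt_top hCtop hδ0).ne)
    obtain ⟨T, hT, hTcard⟩ := hBinf.exists_subset_card_eq k0
    have hU : (⋃ n' ∈ T, {m | m ∈ A ∧ μ m (E n') < δ}).Finite :=
      T.finite_toSet.biUnion fun n' hn' => hT hn'
    obtain ⟨m, hm⟩ := (hA.diff hU).nonempty
    have hmA : m ∈ A := hm.1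
    have hge : ∀ n' ∈ T, δ ≤ μ m (E n') := by
      intro n' hn'
      by_contra hlt
      exact hm.2 (Set.mem_biUnion hn' ⟨hmA, not_le.mp hlt⟩)
    have hsum : (k0 : ℝ≥0∞) * δ ≤ μ m Set.univ := by
      calc (k0 : ℝ≥0∞) * δ = ∑ _n' ∈ T, δ := by
            rw [Finset.sum_const, hTcard, nsmul_eq_mul]
        _ ≤ ∑ n' ∈ T, μ m (E n') := Finset.sum_le_sum fun n' hn' => hge n' hn'
        _ = μ m (⋃ n' ∈ T, E n') := by
            refine (measure_biUnion_finset ?_ fun b _ => hE b).symm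
            intro a _ b _ hab
            exact hdisj a b hab
        _ ≤ μ m Set.univ := measure_mono (Set.subset_univ _)
    have hC2 : C < (k0 : ℝ≥0∞) * δ :=
      (ENNReal.div_lt_iff (Or.inl hδ0) (Or.inl hδt)).mp hk0
    exact absurd (hsum.trans (hbd m)) (not_le.mpr hC2)
  -- Step 2: pick a good index n ∈ A.
  obtain ⟨n, hn⟩ := (hA.diff hBad).nonempty
  have hnA : n ∈ A := hn.1
  have hGinf : {m | m ∈ A ∧ μ m (E n) < δ}.Infinite := hn.2
  -- Step 3: tail cutoff for the row of μ n.
  have hne : (∑' m, μ n (E m)) ≠ ⊤ := by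
    rw [← measure_iUnion (fun i j hij => hdisj i j hij) hE]
    exact ((measure_mono (Set.subset_univ _)).trans (hbd n)).trans_lt hCtop.lt_top |>.ne
  have htail := ENNReal.tendsto_sum_nat_add (fun m => μ n (E m)) hne
  obtain ⟨M, hM⟩ := (htail.eventually_lt_const (pos_iff_ne_zero.mpr hθ0)).exists
  -- Step 4: define A'.
  refine ⟨(n, {m | m ∈ A ∧ μ m (E n) < δ ∧ max n M < m}), hnA, fun m hm => hm.1, ?_, ?_, ?_⟩
  · apply (hGinf.diff (Set.finite_le_nat (max n M))).mono
    intro m hm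
    exact ⟨hm.1.1, hm.1.2, not_le.mp hm.2⟩
  · intro m hm
    exact ⟨lt_of_le_of_lt (le_max_left n M) hm.2.2, hm.2.1⟩
  · calc μ n (⋃ m ∈ {m | m ∈ A ∧ μ m (E n) < δ ∧ max n M < m}, E m)
        ≤ μ n (⋃ i, E (i + M)) := by
          refine measure_mono (Set.iUnion₂_subset fun m hm => ?_)
          have hMm : M ≤ m := le_of_lt (lt_of_le_of_lt (le_max_right n M) hm.2.2)
          have hmM : m - M + M = m := Nat.sub_add_cancel hMm
          rw [← hmM]
          exact Set.subset_iUnion (fun i => E (i + M)) (m - M)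
      _ ≤ ∑' i, μ n (E (i + M)) := measure_iUnion_le _
      _ < θ := hM

/-- **Subsequence avoiding disjoint sets.** Let `(μ_n)` be a sequence of finite positive Borel
measures on a metric space with `sup_n μ_n(S) < ∞` and let `(E_n)` be pairwise disjoint Borel
sets. Then for every `ε > 0` there is a strictly increasing sequence `(n_i)` such that
`μ_{n_i}(⋃_{j ≠ i} E_{n_j}) < ε` for every `i`. -/
theorem subsequence_small_on_disjoint_sets {S : Type*} [MetricSpace S] [MeasurableSpace S]
    [BorelSpace S]
    (μ : ℕ → Measure S) (hfin : ∀ n, IsFiniteMeasure (μ n))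
    (hbd : ∃ C : ℝ≥0∞, C ≠ ⊤ ∧ ∀ n, μ n Set.univ ≤ C)
    (E : ℕ → Set S) (hE : ∀ n, MeasurableSet (E n))
    (hdisj : ∀ n m, n ≠ m → Disjoint (E n) (E m)) :
    ∀ ε : ℝ, 0 < ε → ∃ n : ℕ → ℕ, StrictMono n ∧
      ∀ i : ℕ, μ (n i) (⋃ j ∈ {j : ℕ | j ≠ i}, E (n j)) < ENNReal.ofReal ε := by
  intro ε hε
  obtain ⟨C, hCtop, hC⟩ := hbd
  set ε' : ℝ≥0∞ := ENNReal.ofReal ε with hε'def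
  have hε'0 : ε' ≠ 0 := (ENNReal.ofReal_pos.mpr hε).ne'
  have hε't : ε' ≠ ⊤ := ENNReal.ofReal_ne_top
  have h2ne0 : ((2 : ℝ≥0∞))⁻¹ ≠ 0 := by simp
  -- thresholds
  have hδ0 : ∀ k : ℕ, ε' * (2 : ℝ≥0∞)⁻¹ ^ (k + 3) ≠ 0 := fun k =>
    mul_ne_zero hε'0 (pow_ne_zero _ h2ne0)
  have hδt : ∀ k : ℕ, ε' * (2 : ℝ≥0∞)⁻¹ ^ (k + 3) ≠ ⊤ := fun k =>
    ENNReal.mul_ne_top hε't (by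
      refine ENNReal.pow_ne_top ?_
      simp [ENNReal.inv_ne_top])
  have hθ0 : ∀ k : ℕ, ε' * (2 : ℝ≥0∞)⁻¹ ^ (k + 2) ≠ 0 := fun k =>
    mul_ne_zero hε'0 (pow_ne_zero _ h2ne0)
  have key' : ∀ (k : ℕ) (A : Set ℕ), ∃ p : ℕ × Set ℕ, A.Infinite →
      (p.1 ∈ A ∧ p.2 ⊆ A ∧ p.2.Infinite ∧
        (∀ m ∈ p.2, p.1 < m ∧ μ m (E p.1) < ε' * (2 : ℝ≥0∞)⁻¹ ^ (k + 3)) ∧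
        μ p.1 (⋃ m ∈ p.2, E m) < ε' * (2 : ℝ≥0∞)⁻¹ ^ (k + 2)) := by
    intro k A
    by_cases h : A.Infinite
    · obtain ⟨p, hp⟩ := key_selection μ C hCtop hC E hE hdisj _ _ (hδ0 k) (hδt k) (hθ0 k) A h
      exact ⟨p, fun _ => hp⟩
    · exact ⟨(0, ∅), fun h' => absurd h' h⟩
  choose F hF using key'
  let c : ℕ → ℕ × Set ℕ := mychain F
  have hc0 : c 0 = F 0 Set.univ := rfl
  have hcs : ∀ k, c (k + 1) = F (k + 1) (c k).2 := fun k => rfl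
  -- invariants
  have hinf : ∀ k, (c k).2.Infinite := by
    intro k
    induction k with
    | zero => rw [hc0]; exact (hF 0 Set.univ Set.infinite_univ).2.2.1
    | succ k ih => rw [hcs k]; exact (hF (k + 1) (c k).2 ih).2.2.1
  have hprop : ∀ k, (∀ m ∈ (c k).2, (c k).1 < m ∧ μ m (E (c k).1) < ε' * (2 : ℝ≥0∞)⁻¹ ^ (k + 3))
      ∧ μ (c k).1 (⋃ m ∈ (c k).2, E m) < ε' * (2 : ℝ≥0∞)⁻¹ ^ (k + 2) := by
    intro k
    cases k with
    | zero => rw [hc0]; exact (hF 0 Set.univ Set.infinite_univ).2.2.2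
    | succ k => rw [hcs k]; exact (hF (k + 1) (c k).2 (hinf k)).2.2.2
  have hmem : ∀ k, (c (k + 1)).1 ∈ (c k).2 := by
    intro k
    rw [hcs k]
    exact (hF (k + 1) (c k).2 (hinf k)).1
  have hsub : ∀ k, (c (k + 1)).2 ⊆ (c k).2 := by
    intro k
    rw [hcs k]
    exact (hF (k + 1) (c k).2 (hinf k)).2.1
  have hsub' : ∀ j k, j ≤ k → (c k).2 ⊆ (c j).2 := by
    intro j k h
    induction h with
    | refl => exact subset_rfl
    | step h ih => exact (hsub _).trans ih
  have hmem' : ∀ j k, j < k → (c k).1 ∈ (c j).2 := by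
    intro j k h
    cases k with
    | zero => omega
    | succ m => exact hsub' j m (by omega) (hmem m)
  -- the subsequence
  refine ⟨fun i => (c i).1, ?_, ?_⟩
  · refine strictMono_nat_of_lt_succ fun k => ?_
    exact ((hprop k).1 _ (hmem k)).1
  · intro i
    -- geometric sum facts
    have hq2 : ((2 : ℝ≥0∞))⁻¹ * 2 = 1 := ENNReal.inv_mul_cancel two_ne_zero ENNReal.ofNat_ne_top
    have hgeo : (∑' j : ℕ, ((2 : ℝ≥0∞))⁻¹ ^ (j + 3)) = (2 : ℝ≥0∞)⁻¹ ^ 2 := by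
      have h1 : (∑' j : ℕ, ((2 : ℝ≥0∞))⁻¹ ^ (j + 3))
          = (∑' j : ℕ, ((2 : ℝ≥0∞))⁻¹ ^ j) * (2 : ℝ≥0∞)⁻¹ ^ 3 := by
        simp_rw [pow_add]
        exact ENNReal.tsum_mul_right
      rw [h1, ENNReal.tsum_geometric, ENNReal.one_sub_inv_two, inv_inv]
      calc (2 : ℝ≥0∞) * (2 : ℝ≥0∞)⁻¹ ^ 3 = (2 : ℝ≥0∞)⁻¹ ^ 2 * ((2 : ℝ≥0∞)⁻¹ * 2) := by ring
        _ = (2 : ℝ≥0∞)⁻¹ ^ 2 := by rw [hq2, mul_one]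
    have hsum1 : (∑ j ∈ Finset.range i, (ε' * (2 : ℝ≥0∞)⁻¹ ^ (j + 3))) ≤ ε' * (2 : ℝ≥0∞)⁻¹ ^ 2 := by
      rw [← Finset.mul_sum]
      refine mul_le_mul_right ?_ ε'
      calc ∑ j ∈ Finset.range i, ((2 : ℝ≥0∞))⁻¹ ^ (j + 3)
          ≤ ∑' j : ℕ, ((2 : ℝ≥0∞))⁻¹ ^ (j + 3) := ENNReal.sum_le_tsum _
        _ = (2 : ℝ≥0∞)⁻¹ ^ 2 := hgeo
    -- split the union
    have hsubU : (⋃ j ∈ {j : ℕ | j ≠ i}, E ((c j).1)) ⊆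
        (⋃ j ∈ Finset.range i, E ((c j).1)) ∪ (⋃ m ∈ (c i).2, E m) := by
      intro x hx
      simp only [Set.mem_iUnion, Set.mem_setOf_eq] at hx
      obtain ⟨j, hj, hxj⟩ := hx
      rcases lt_or_gt_of_ne hj with hlt | hgt
      · left
        exact Set.mem_biUnion (Finset.mem_range.mpr hlt) hxj
      · right
        exact Set.mem_biUnion (hmem' i j hgt) hxj
    have hbound1 : μ ((c i).1) (⋃ j ∈ Finset.range i, E ((c j).1))
        ≤ ∑ j ∈ Finset.range i, (ε' * (2 : ℝ≥0∞)⁻¹ ^ (j + 3)) := by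
      refine (measure_biUnion_finset_le _ _).trans ?_
      refine Finset.sum_le_sum fun j hj => ?_
      exact le_of_lt (((hprop j).1 ((c i).1) (hmem' j i (Finset.mem_range.mp hj))).2)
    have hθle : ε' * (2 : ℝ≥0∞)⁻¹ ^ (i + 2) ≤ ε' * (2 : ℝ≥0∞)⁻¹ ^ 2 := by
      refine mul_le_mul_right ?_ ε'
      exact pow_le_pow_of_le_one zero_le (ENNReal.inv_le_one.mpr one_le_two) (by omega)
    have hhalf : ε' * (2 : ℝ≥0∞)⁻¹ ^ 2 + ε' * (2 : ℝ≥0∞)⁻¹ ^ 2 = ε' * (2 : ℝ≥0∞)⁻¹ := by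
      rw [← mul_add]
      congr 1
      calc (2 : ℝ≥0∞)⁻¹ ^ 2 + (2 : ℝ≥0∞)⁻¹ ^ 2 = (2 : ℝ≥0∞)⁻¹ * ((2 : ℝ≥0∞)⁻¹ * 2) := by ring
        _ = (2 : ℝ≥0∞)⁻¹ := by rw [hq2, mul_one]
    calc μ ((c i).1) (⋃ j ∈ {j : ℕ | j ≠ i}, E ((c j).1))
        ≤ μ ((c i).1) ((⋃ j ∈ Finset.range i, E ((c j).1)) ∪ (⋃ m ∈ (c i).2, E m)) :=
          measure_mono hsubU
      _ ≤ μ ((c i).1) (⋃ j ∈ Finset.range i, E ((c j).1)) + μ ((c i).1) (⋃ m ∈ (c i).2, E m) :=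
          measure_union_le _ _
      _ ≤ (∑ j ∈ Finset.range i, (ε' * (2 : ℝ≥0∞)⁻¹ ^ (j + 3))) + ε' * (2 : ℝ≥0∞)⁻¹ ^ (i + 2) :=
          add_le_add hbound1 (le_of_lt (hprop i).2)
      _ ≤ ε' * (2 : ℝ≥0∞)⁻¹ ^ 2 + ε' * (2 : ℝ≥0∞)⁻¹ ^ 2 := add_le_add hsum1 hθle
      _ = ε' * (2 : ℝ≥0∞)⁻¹ := hhalf
      _ = ε' / 2 := by rw [div_eq_mul_inv]
      _ < ε' := ENNReal.half_lt_self hε'0 hε't
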